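/- Let 𝕋 = ℝ/2πℤ with Lebesgue measure and let f ∈ L²(𝕋; ℂ) be such that its Fourier coefficients f̂(k) := (1/2π)∫_𝕋 f(x) e^{−ikx} dx vanish for every negative integer k. If f = 0 almost everywhere on some nonempty open subset ω ⊆ 𝕋, then f = 0 almost everywhere on 𝕋. -/

import Mathlib

set_option linter.unusedSectionVars false
set_option maxHeartbeats 1000000

open MeasureTheory Set Metric Complex Filter

instance : Fact ((0 : ℝ) < 2 * Real.pi) := ⟨by positivity⟩

section aux
variable {T : ℝ} [hT : Fact (0 < T)]

lemma fourier_one_abs (x : AddCircle T) : ‖(fourier 1 x : ℂ)‖ = 1 := by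
  rw [fourier_apply]; exact Circle.norm_coe _

lemma fourier_one_norm (x : AddCircle T) : ‖(fourier 1 x : ℂ)‖ = 1 :=
  fourier_one_abs x

lemma fourier_one_ne_zero (x : AddCircle T) : (fourier 1 x : ℂ) ≠ 0 := by
  intro h
  have := fourier_one_abs x
  rw [h] at this
  simp at this

lemma fourier_one_pow (n : ℕ) (x : AddCircle T) :
    (fourier 1 x : ℂ) ^ n = fourier (n : ℤ) x := by
  induction n with
  | zero => simp [fourier_zero]
  | succ k ihk =>
      rw [pow_succ, ihk, ← fourier_add]
      norm_cast

lemma fourier_one_inv_pow (n : ℕ) (x : AddCircle T) :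
    ((fourier 1 x : ℂ)⁻¹) ^ n = fourier (-(n : ℤ)) x := by
  rw [inv_pow, fourier_one_pow, Complex.inv_eq_conj, ← fourier_neg]
  rw [fourier_apply]; exact Circle.norm_coe _

lemma fourier_one_injective :
    Function.Injective (fun x : AddCircle T => (fourier 1 x : ℂ)) := by
  intro x y hxy
  simp only [fourier_one] at hxy
  exact AddCircle.injective_toCircle hT.out.ne' (Subtype.coe_injective hxy)

end aux


lemma aux_coeff_zero {a : ℕ → ℂ} {C : ℝ} (hC : ∀ n, ‖a n‖ ≤ C)
    (h : ∀ z : ℂ, ‖z‖ < 1 → HasSum (fun n => a n * z ^ n) 0) : ∀ n, a n = 0 := by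
  have hC0 : 0 ≤ C := le_trans (norm_nonneg _) (hC 0)
  intro m
  induction m using Nat.strong_induction_on with
  | _ m ih =>
  have hkey : ∀ ε : ℝ, 0 < ε → ε < 1 / 2 → ‖a m‖ ≤ 2 * C * ε := by
    intro ε hε hε2
    set z : ℂ := (ε : ℂ) with hz
    have hznorm : ‖z‖ < 1 := by
      simp only [hz, Complex.norm_real, Real.norm_eq_abs, abs_of_pos hε]; linarith
    have hz0 : z ≠ 0 := by
      simp only [hz, ne_eq, Complex.ofReal_eq_zero]; exact hε.ne'
    have h1 : HasSum (fun n => a n * z ^ n) 0 := h z hznorm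
    -- shift by m
    have hsum0 : (∑ i ∈ Finset.range m, a i * z ^ i) = 0 := by
      apply Finset.sum_eq_zero
      intro i hi
      rw [ih i (Finset.mem_range.mp hi), zero_mul]
    have h2 : HasSum (fun n => a (n + m) * z ^ (n + m)) 0 := by
      rw [← hasSum_nat_add_iff' m] at h1
      rwa [hsum0, sub_zero] at h1
    have h3 : HasSum (fun n => a (n + m) * z ^ n) 0 := by
      have hzm : (z ^ m)⁻¹ ≠ 0 := inv_ne_zero (pow_ne_zero _ hz0)
      have := h2.mul_left (z ^ m)⁻¹
      rw [mul_zero] at this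
      convert this using 2 with n
      · rfl
      rw [pow_add]
      field_simp
    -- drop the 0th term
    have h4 : HasSum (fun n => a (n + 1 + m) * z ^ (n + 1)) (0 - a m) := by
      rw [← hasSum_nat_add_iff' 1] at h3
      rw [Finset.sum_range_one] at h3
      simpa using h3
    have hnorm : ‖a m‖ = ‖∑' n : ℕ, a (n + 1 + m) * z ^ (n + 1)‖ := by
      rw [h4.tsum_eq, zero_sub, norm_neg]
    have hsummable : Summable (fun n : ℕ => C * ε ^ (n + 1)) := by
      apply Summable.mul_left
      exact (summable_geometric_of_lt_one hε.le (by linarith)).comp_injective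
        (add_left_injective 1)
    have hzeps : ‖z‖ = ε := by simp [hz, abs_of_pos hε]
    have hbnd : ∀ n : ℕ, ‖a (n + 1 + m) * z ^ (n + 1)‖ ≤ C * ε ^ (n + 1) := by
      intro n
      rw [norm_mul, norm_pow, hzeps]
      exact mul_le_mul_of_nonneg_right (hC _) (by positivity)
    have hsumnorm : Summable (fun n : ℕ => ‖a (n + 1 + m) * z ^ (n + 1)‖) :=
      hsummable.of_nonneg_of_le (fun n => norm_nonneg _) hbnd
    have hle : ‖a m‖ ≤ ∑' n : ℕ, C * ε ^ (n + 1) := by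
      rw [hnorm]
      exact (norm_tsum_le_tsum_norm hsumnorm).trans
        (Summable.tsum_le_tsum hbnd hsumnorm hsummable)
    have htsum : ∑' n : ℕ, C * ε ^ (n + 1) ≤ 2 * C * ε := by
      have : ∑' n : ℕ, C * ε ^ (n + 1) = C * ε * ∑' n : ℕ, ε ^ n := by
        rw [← tsum_mul_left]
        congr 1 with n
        ring
      rw [this, tsum_geometric_of_lt_one hε.le (by linarith)]
      have h5 : (1 - ε)⁻¹ ≤ 2 := by
        rw [inv_le_comm₀ (by linarith) (by norm_num)]
        linarith
      calc C * ε * (1 - ε)⁻¹ ≤ C * ε * 2 :=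
            mul_le_mul_of_nonneg_left h5 (by positivity)
        _ = 2 * C * ε := by ring
    exact hle.trans htsum
  by_contra hne
  have hpos : 0 < ‖a m‖ := norm_pos_iff.mpr hne
  set ε : ℝ := min (1/4) (‖a m‖ / (4 * C + 1)) with hε_def
  have hε : 0 < ε := lt_min (by norm_num) (by positivity)
  have hε2 : ε < 1 / 2 := lt_of_le_of_lt (min_le_left _ _) (by norm_num)
  have := hkey ε hε hε2
  have h6 : ε ≤ ‖a m‖ / (4 * C + 1) := min_le_right _ _
  have h7 : 2 * C * ε ≤ 2 * C * (‖a m‖ / (4 * C + 1)) :=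
    mul_le_mul_of_nonneg_left h6 (by positivity)
  have h8 : 2 * C * (‖a m‖ / (4 * C + 1)) < ‖a m‖ := by
    rw [div_eq_inv_mul, ← mul_assoc]
    have : 2 * C * (4 * C + 1)⁻¹ < 1 := by
      rw [mul_inv_lt_iff₀ (by positivity)]
      linarith
    calc 2 * C * (4 * C + 1)⁻¹ * ‖a m‖ < 1 * ‖a m‖ :=
          mul_lt_mul_of_pos_right this hpos
      _ = ‖a m‖ := one_mul _
  linarith

-- connectivity of exterior
lemma aux_ext_preconnected : IsPreconnected {z : ℂ | 1 < ‖z‖} := by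
  have : {z : ℂ | 1 < ‖z‖} = Complex.exp '' {w : ℂ | 0 < w.re} := by
    ext z
    simp only [mem_setOf_eq, mem_image]
    constructor
    · intro hz
      have hz0 : z ≠ 0 := by
        intro h; rw [h] at hz; norm_num at hz
      refine ⟨Complex.log z, ?_, Complex.exp_log hz0⟩
      rw [Complex.log_re]
      exact Real.log_pos hz
    · rintro ⟨w, hw, rfl⟩
      rw [Complex.norm_exp]
      exact Real.one_lt_exp_iff.mpr hw
  rw [this]
  exact ((convex_halfSpace_re_gt 0).isPreconnected).image _
    Complex.continuous_exp.continuousOn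


theorem hardy_space_unique_continuation (f : AddCircle (2 * Real.pi) → ℂ)
    (hf : MemLp f 2 volume)
    (hcoef : ∀ k : ℤ, k < 0 →
      (1 / (2 * Real.pi) : ℂ) *
        (∫ x : AddCircle (2 * Real.pi), f x * fourier (-k) x) = 0)
    (ω : Set (AddCircle (2 * Real.pi))) (hω_open : IsOpen ω) (hω_ne : ω.Nonempty)
    (hzero : ∀ᵐ x ∂(volume.restrict ω), f x = 0) :
    ∀ᵐ x ∂(volume : Measure (AddCircle (2 * Real.pi))), f x = 0 := by
  have hωm : MeasurableSet ω := hω_open.measurableSet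
  set e : AddCircle (2 * Real.pi) → ℂ := fun x => fourier 1 x with he
  have hecont : Continuous e := (fourier 1).continuous
  have henorm : ∀ x, ‖e x‖ = 1 := fun x => fourier_one_norm x
  have hene : ∀ x, e x ≠ 0 := fun x => fourier_one_ne_zero x
  set g : AddCircle (2 * Real.pi) → ℂ := Set.indicator ωᶜ f with hgdef
  have hgx0 : ∀ x ∈ ω, g x = 0 := by
    intro x hx
    exact Set.indicator_of_notMem (by simpa using hx) f
  have hfg : f =ᵐ[volume] g := by
    filter_upwards [(ae_restrict_iff' hωm).mp hzero] with x hx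
    by_cases hxω : x ∈ ω
    · rw [hgx0 x hxω, hx hxω]
    · exact (Set.indicator_of_mem (by simpa using hxω) f).symm
  have hg2 : MemLp g 2 volume := hf.ae_eq hfg
  have hgmeas : AEStronglyMeasurable g volume := hg2.aestronglyMeasurable
  have hgint : Integrable g volume := hg2.integrable one_le_two
  -- integrals against fourier modes
  set A : ℤ → ℂ := fun k => ∫ x : AddCircle (2 * Real.pi), g x * fourier k x with hA
  have hA_f : ∀ k : ℤ, A k = ∫ x : AddCircle (2 * Real.pi), f x * fourier k x := by
    intro k
    apply integral_congr_ae
    filter_upwards [hfg] with x hx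
    rw [hx]
  have h2pi_ne : (1 / (2 * Real.pi) : ℂ) ≠ 0 := by
    apply one_div_ne_zero
    simp only [ne_eq, mul_eq_zero]
    push_neg
    constructor
    · norm_num
    · exact_mod_cast Complex.ofReal_ne_zero.mpr Real.pi_ne_zero
  have hA_pos : ∀ k : ℤ, 0 < k → A k = 0 := by
    intro k hk
    have h1 := hcoef (-k) (by omega)
    rw [neg_neg] at h1
    rcases mul_eq_zero.mp h1 with h | h
    · exact absurd h h2pi_ne
    · rw [hA_f k]; exact h
  have hA_bound : ∀ k : ℤ, ‖A k‖ ≤ ∫ x : AddCircle (2 * Real.pi), ‖g x‖ := by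
    intro k
    refine (norm_integral_le_integral_norm _).trans ?_
    apply integral_mono_of_nonneg (Eventually.of_forall fun x => norm_nonneg _)
      hgint.norm
    apply Eventually.of_forall
    intro x
    simp only [norm_mul]
    have : ‖(fourier k x : ℂ)‖ = 1 := by
      rw [fourier_apply]
      exact Circle.norm_coe _
    rw [this, mul_one]
  -- the compact set and its complement
  set K : Set ℂ := e '' ωᶜ with hK
  have hKsphere : ∀ w ∈ K, ‖w‖ = 1 := by
    rintro w ⟨x, -, rfl⟩
    exact henorm x
  have hKclosed : IsClosed K :=
    ((hω_open.isClosed_compl.isCompact).image hecont).isClosed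
  set Ω : Set ℂ := Kᶜ with hΩdef
  have hΩopen : IsOpen Ω := hKclosed.isOpen_compl
  -- the Cauchy-type transform
  set F : ℂ → AddCircle (2 * Real.pi) → ℂ := fun z x => g x * e x * (e x - z)⁻¹
    with hF
  set G : ℂ → ℂ := fun z => ∫ x : AddCircle (2 * Real.pi), F z x with hG
  have hFmeas : ∀ z : ℂ, AEStronglyMeasurable (F z) volume := by
    intro z
    exact (hgmeas.mul hecont.aestronglyMeasurable).mul
      ((hecont.measurable.sub_const z).inv.aestronglyMeasurable)
  -- differentiability on Ω
  have hGdiff : DifferentiableOn ℂ G Ω := by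
    intro z₀ hz₀
    obtain ⟨ε, hε, hball⟩ := Metric.isOpen_iff.mp hΩopen z₀ hz₀
    have hKdist : ∀ w ∈ K, ∀ z ∈ ball z₀ (ε / 2), ε / 2 ≤ ‖w - z‖ := by
      intro w hw z hz
      by_contra hlt
      push_neg at hlt
      have hz' : dist z z₀ < ε / 2 := mem_ball.mp hz
      have hwz : dist w z < ε / 2 := by rw [dist_eq_norm]; exact hlt
      have : w ∈ ball z₀ ε :=
        mem_ball.mpr (lt_of_le_of_lt (dist_triangle w z z₀) (by linarith))
      exact (hball this) hw
    set F' : ℂ → AddCircle (2 * Real.pi) → ℂ :=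
      fun z x => g x * e x * ((e x - z) ^ 2)⁻¹ with hF'
    have hF'meas : ∀ z : ℂ, AEStronglyMeasurable (F' z) volume := by
      intro z
      exact (hgmeas.mul hecont.aestronglyMeasurable).mul
        (((hecont.measurable.sub_const z).pow_const 2).inv.aestronglyMeasurable)
    have hdist : ∀ x : AddCircle (2 * Real.pi), x ∉ ω → ∀ z ∈ ball z₀ (ε / 2),
        ε / 2 ≤ ‖e x - z‖ := by
      intro x hx z hz
      exact hKdist (e x) ⟨x, by simpa using hx, rfl⟩ z hz
    have key := hasDerivAt_integral_of_dominated_loc_of_deriv_le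
      (F := F) (F' := F') (x₀ := z₀) (s := ball z₀ (ε / 2))
      (bound := fun x => ‖g x‖ * ((ε / 2) ^ 2)⁻¹)
      (ball_mem_nhds z₀ (by positivity))
      (Eventually.of_forall fun z => hFmeas z)
      ?_ (hF'meas z₀) ?_ ?_ ?_
    · exact key.2.differentiableAt.differentiableWithinAt
    · -- Integrable (F z₀)
      apply Integrable.mono' (hgint.norm.mul_const ((ε / 2)⁻¹)) (hFmeas z₀)
      apply Eventually.of_forall
      intro x
      by_cases hx : x ∈ ω
      · simp only [hF, hgx0 x hx, zero_mul, norm_zero]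
        positivity
      · have h1 : ε / 2 ≤ ‖e x - z₀‖ := hdist x hx z₀ (mem_ball_self (by positivity))
        simp only [hF, norm_mul, norm_inv, henorm, mul_one]
        apply mul_le_mul_of_nonneg_left _ (norm_nonneg _)
        exact inv_anti₀ (by positivity) h1
    · -- bound on F'
      apply Eventually.of_forall
      intro x z hz
      by_cases hx : x ∈ ω
      · simp only [hF', hgx0 x hx, zero_mul, norm_zero]
        positivity
      · have h1 : ε / 2 ≤ ‖e x - z‖ := hdist x hx z hz
        simp only [hF', norm_mul, norm_inv, norm_pow, henorm, mul_one]
        apply mul_le_mul_of_nonneg_left _ (norm_nonneg _)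
        apply inv_anti₀ (by positivity)
        exact pow_le_pow_left₀ (by positivity) h1 2
    · exact hgint.norm.mul_const _
    · -- differentiability pointwise
      apply Eventually.of_forall
      intro x z hz
      by_cases hx : x ∈ ω
      · have : (fun z => F z x) = fun _ => 0 := by
          funext z
          simp [hF, hgx0 x hx]
        rw [this]
        have : F' z x = 0 := by simp [hF', hgx0 x hx]
        rw [this]
        exact hasDerivAt_const _ _
      · have h1 : ε / 2 ≤ ‖e x - z‖ := hdist x hx z hz
        have hne : e x - z ≠ 0 := by
          intro h
          rw [h, norm_zero] at h1
          linarith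
        have hd1 : HasDerivAt (fun w : ℂ => e x - w) (-1) z := by
          simpa using (hasDerivAt_id z).const_sub (e x)
        have hd2 := (hd1.inv hne).const_mul (g x * e x)
        convert hd2 using 1
        · rfl
        · rfl
        rw [hF']
        field_simp
  have hGanalytic : AnalyticOnNhd ℂ G Ω := hGdiff.analyticOnNhd hΩopen
  set C0 : ℝ := ∫ x : AddCircle (2 * Real.pi), ‖g x‖ with hC0
  -- G vanishes outside the closed unit disc
  have hGext : ∀ z : ℂ, 1 < ‖z‖ → G z = 0 := by
    intro z hz1
    have hz0 : z ≠ 0 := by intro h; rw [h, norm_zero] at hz1; linarith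
    set Fn : ℕ → AddCircle (2 * Real.pi) → ℂ :=
      fun n x => -(g x * (e x * z⁻¹) ^ (n + 1)) with hFn
    have hrx : ∀ x, ‖e x * z⁻¹‖ = ‖z‖⁻¹ := by
      intro x; rw [norm_mul, henorm, one_mul, norm_inv]
    have hrlt : ‖z‖⁻¹ < 1 := inv_lt_one_of_one_lt₀ hz1
    have hptsum : ∀ x, HasSum (fun n => Fn n x) (F z x) := by
      intro x
      have hrx1 : ‖e x * z⁻¹‖ < 1 := by rw [hrx]; exact hrlt
      have hgeo := hasSum_geometric_of_norm_lt_one hrx1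
      have h2 := hgeo.mul_left (-(g x * (e x * z⁻¹)))
      have heq : (fun n : ℕ => -(g x * (e x * z⁻¹)) * (e x * z⁻¹) ^ n)
          = fun n => Fn n x := by
        funext n; rw [hFn]; simp only; rw [pow_succ]; ring
      rw [heq] at h2
      convert h2 using 1
      · rfl
      have hez : e x - z ≠ 0 := by
        intro h
        rw [sub_eq_zero] at h
        rw [← h, henorm] at hz1
        linarith
      have h1r : (1 : ℂ) - e x * z⁻¹ ≠ 0 := by
        have hrw : (1 : ℂ) - e x * z⁻¹ = (z - e x) * z⁻¹ := by field_simp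
        rw [hrw]
        refine mul_ne_zero (fun h => hez ?_) (inv_ne_zero hz0)
        rw [sub_eq_zero] at h ⊢
        exact h.symm
      have hze' : z - e x ≠ 0 := fun h => hez (by rw [show e x - z = -(z - e x) by ring, h, neg_zero])
      rw [hF]
      simp only
      field_simp [hz0, hze']
      ring
    have hFnnorm : ∀ (n : ℕ) x, ‖Fn n x‖ = ‖g x‖ * (‖z‖⁻¹) ^ (n + 1) := by
      intro n x
      rw [hFn]
      simp only [norm_neg, norm_mul, norm_pow, hrx]
    have hFnint : ∀ n : ℕ, Integrable (Fn n) volume := by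
      intro n
      have hm : AEStronglyMeasurable (Fn n) volume :=
        (hgmeas.mul ((hecont.mul continuous_const).pow (n + 1)).aestronglyMeasurable).neg
      apply Integrable.mono' (hgint.norm.mul_const ((‖z‖⁻¹) ^ (n + 1))) hm
      exact Eventually.of_forall fun x => le_of_eq (hFnnorm n x)
    have hsummable : Summable (fun n : ℕ => ∫ x : AddCircle (2 * Real.pi), ‖Fn n x‖) := by
      have hgeosum : Summable (fun n : ℕ => C0 * (‖z‖⁻¹) ^ (n + 1)) :=
        Summable.mul_left C0 ((summable_geometric_of_lt_one (by positivity) hrlt).comp_injective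
          (add_left_injective 1))
      apply hgeosum.congr
      intro n
      rw [hC0]
      simp_rw [hFnnorm n]
      rw [integral_mul_const]
    have hsum := hasSum_integral_of_summable_integral_norm hFnint hsummable
    have h5 : (∫ x : AddCircle (2 * Real.pi), (∑' n, Fn n x)) = G z := by
      apply integral_congr_ae
      exact Eventually.of_forall fun x => (hptsum x).tsum_eq
    rw [h5] at hsum
    have hterm : ∀ n : ℕ, (∫ x : AddCircle (2 * Real.pi), Fn n x) = 0 := by
      intro n
      have heqx : ∀ x, Fn n x = -((z⁻¹) ^ (n + 1)) * (g x * fourier ((n : ℤ) + 1) x) := by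
        intro x
        rw [hFn]
        simp only
        rw [mul_pow]
        have : (e x) ^ (n + 1) = fourier ((n : ℤ) + 1) x := by
          rw [fourier_one_pow (n + 1) x]
          push_cast
          ring_nf
        rw [this]
        ring
      rw [integral_congr_ae (Eventually.of_forall heqx), integral_const_mul]
      have : A ((n : ℤ) + 1) = 0 := hA_pos _ (by positivity)
      rw [hA] at this
      simp only at this
      rw [this, mul_zero]
    have hz' : (fun n : ℕ => ∫ x : AddCircle (2 * Real.pi), Fn n x) = fun _ => (0 : ℂ) :=
      funext hterm
    rw [hz'] at hsum
    exact (hsum.unique hasSum_zero).symm ▸ (hsum.unique hasSum_zero)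
  -- the exterior is an open subset of Ω
  have hUopen : IsOpen {z : ℂ | 1 < ‖z‖} := by
    have : Continuous fun z : ℂ => ‖z‖ := continuous_norm
    exact isOpen_lt continuous_const this
  have hUsub : {z : ℂ | 1 < ‖z‖} ⊆ Ω := by
    intro z hz hzK
    have h1 := hKsphere z hzK
    simp only [mem_setOf_eq] at hz
    rw [h1] at hz
    exact lt_irrefl 1 hz
  have h2mem : (2 : ℂ) ∈ {z : ℂ | 1 < ‖z‖} := by
    simp only [mem_setOf_eq]
    rw [show ((2 : ℂ) = ((2 : ℝ) : ℂ)) by norm_num, Complex.norm_real]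
    rw [Real.norm_eq_abs]
    norm_num
  -- sphere point not in K
  obtain ⟨x₀, hx₀⟩ := hω_ne
  have hw₀ : e x₀ ∈ sphere (0 : ℂ) 1 \ K := by
    constructor
    · exact mem_sphere_zero_iff_norm.mpr (henorm x₀)
    · rintro ⟨y, hy, hxy⟩
      have : y = x₀ := fourier_one_injective hxy
      rw [this] at hy
      exact hy hx₀
  -- Ω is preconnected
  have hpre : IsPreconnected Ω := by
    set S : Set ℂ := sphere (0 : ℂ) 1 \ K with hS
    have hP1 : IsPreconnected (ball (0 : ℂ) 1 ∪ S) := by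
      apply ((convex_ball (0 : ℂ) 1).isPreconnected).subset_closure subset_union_left
      rw [closure_ball (0 : ℂ) one_ne_zero]
      apply union_subset ball_subset_closedBall
      exact fun w hw => sphere_subset_closedBall hw.1
    have hP2 : IsPreconnected ({z : ℂ | 1 < ‖z‖} ∪ S) := by
      apply aux_ext_preconnected.subset_closure subset_union_left
      apply union_subset subset_closure
      intro w hw
      have hw1 : ‖w‖ = 1 := mem_sphere_zero_iff_norm.mp hw.1
      rw [Metric.mem_closure_iff]
      intro δ hδ
      set t : ℝ := 1 + min δ 1 / 2 with ht
      have htpos : 1 < t := by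
        rw [ht]
        have : 0 < min δ 1 := lt_min hδ one_pos
        linarith
      refine ⟨(t : ℂ) * w, ?_, ?_⟩
      · simp only [mem_setOf_eq, norm_mul, Complex.norm_real, hw1, mul_one]
        rw [Real.norm_eq_abs, abs_of_pos (by linarith)]
        exact htpos
      · rw [dist_eq_norm]
        have : w - (t : ℂ) * w = -(((t - 1 : ℝ) : ℂ) * w) := by
          push_cast
          ring
        rw [this, norm_neg, norm_mul, Complex.norm_real, hw1, mul_one]
        rw [Real.norm_eq_abs, abs_of_pos (by linarith)]
        rw [ht]
        have h1 : min δ 1 ≤ δ := min_le_left _ _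
        have h2 : 0 < min δ 1 := lt_min hδ one_pos
        linarith
    have hΩeq : Ω = (ball (0 : ℂ) 1 ∪ S) ∪ ({z : ℂ | 1 < ‖z‖} ∪ S) := by
      ext z
      simp only [hΩdef, mem_compl_iff, mem_union, mem_ball_zero_iff, hS, mem_diff,
        mem_sphere_zero_iff_norm, mem_setOf_eq]
      constructor
      · intro hzK
        rcases lt_trichotomy ‖z‖ 1 with h | h | h
        · exact Or.inl (Or.inl h)
        · exact Or.inl (Or.inr ⟨h, hzK⟩)
        · exact Or.inr (Or.inl h)
      · rintro ((h | ⟨-, h⟩) | (h | ⟨-, h⟩))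
        · intro hzK
          rw [hKsphere z hzK] at h
          exact lt_irrefl 1 h
        · exact h
        · intro hzK
          rw [hKsphere z hzK] at h
          exact lt_irrefl 1 h
        · exact h
    rw [hΩeq]
    exact IsPreconnected.union (e x₀) (Or.inr hw₀) (Or.inr hw₀) hP1 hP2
  -- identity theorem: G vanishes on Ω
  have hGzero : EqOn G 0 Ω := by
    apply hGanalytic.eqOn_zero_of_preconnected_of_eventuallyEq_zero hpre (hUsub h2mem)
    filter_upwards [hUopen.mem_nhds h2mem] with z hz
    exact hGext z hz
  have hball_sub : ball (0 : ℂ) 1 ⊆ Ω := by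
    intro z hz hzK
    rw [mem_ball_zero_iff, hKsphere z hzK] at hz
    exact lt_irrefl 1 hz
  -- nonnegative coefficients vanish
  have hAneg : ∀ n : ℕ, A (-(n : ℤ)) = 0 := by
    apply aux_coeff_zero (C := C0) (fun n => hA_bound _)
    intro z hz1
    set Fn : ℕ → AddCircle (2 * Real.pi) → ℂ :=
      fun n x => g x * (z * (e x)⁻¹) ^ n with hFn
    have hrx : ∀ x, ‖z * (e x)⁻¹‖ = ‖z‖ := by
      intro x; rw [norm_mul, norm_inv, henorm, inv_one, mul_one]
    have hptsum : ∀ x, HasSum (fun n => Fn n x) (F z x) := by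
      intro x
      have hrx1 : ‖z * (e x)⁻¹‖ < 1 := by rw [hrx]; exact hz1
      have h2 := (hasSum_geometric_of_norm_lt_one hrx1).mul_left (g x)
      convert h2 using 1
      · rfl
      have hez : e x - z ≠ 0 := by
        intro h
        rw [sub_eq_zero] at h
        rw [← h, henorm] at hz1
        exact lt_irrefl 1 hz1
      have h1r : (1 : ℂ) - z * (e x)⁻¹ ≠ 0 := by
        have hrw : (1 : ℂ) - z * (e x)⁻¹ = (e x - z) * (e x)⁻¹ := by
          rw [sub_mul, mul_inv_cancel₀ (hene x)]
        rw [hrw]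
        exact mul_ne_zero hez (inv_ne_zero (hene x))
      rw [hF]
      simp only
      field_simp [hene x, hez]
    have hFnnorm : ∀ (n : ℕ) x, ‖Fn n x‖ = ‖g x‖ * ‖z‖ ^ n := by
      intro n x
      rw [hFn]
      simp only [norm_mul, norm_pow, hrx]
    have hFnint : ∀ n : ℕ, Integrable (Fn n) volume := by
      intro n
      have hm : AEStronglyMeasurable (Fn n) volume :=
        hgmeas.mul (((continuous_const.mul (hecont.inv₀ hene))).pow n).aestronglyMeasurable
      apply Integrable.mono' (hgint.norm.mul_const (‖z‖ ^ n)) hm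
      exact Eventually.of_forall fun x => le_of_eq (hFnnorm n x)
    have hsummable : Summable (fun n : ℕ => ∫ x : AddCircle (2 * Real.pi), ‖Fn n x‖) := by
      have hgeosum : Summable (fun n : ℕ => C0 * ‖z‖ ^ n) :=
        Summable.mul_left C0 (summable_geometric_of_lt_one (by positivity) hz1)
      apply hgeosum.congr
      intro n
      rw [hC0]
      simp_rw [hFnnorm n]
      rw [integral_mul_const]
    have hsum := hasSum_integral_of_summable_integral_norm hFnint hsummable
    have h5 : (∫ x : AddCircle (2 * Real.pi), (∑' n, Fn n x)) = G z := by
      apply integral_congr_ae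
      exact Eventually.of_forall fun x => (hptsum x).tsum_eq
    rw [h5, hGzero (hball_sub (mem_ball_zero_iff.mpr hz1))] at hsum
    have hterm : ∀ n : ℕ, (∫ x : AddCircle (2 * Real.pi), Fn n x) = A (-(n : ℤ)) * z ^ n := by
      intro n
      have heqx : ∀ x, Fn n x = z ^ n * (g x * fourier (-(n : ℤ)) x) := by
        intro x
        rw [hFn]
        simp only
        rw [mul_pow, ← fourier_one_inv_pow n x]
        ring
      rw [integral_congr_ae (Eventually.of_forall heqx), integral_const_mul]
      rw [hA]
      simp only
      ring
    have hz' : (fun n : ℕ => ∫ x : AddCircle (2 * Real.pi), Fn n x)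
        = fun n : ℕ => A (-(n : ℤ)) * z ^ n := funext hterm
    rw [hz'] at hsum
    simpa using hsum
  have hA_all : ∀ k : ℤ, A k = 0 := by
    intro k
    rcases le_or_gt k 0 with hk | hk
    · obtain ⟨n, rfl⟩ : ∃ n : ℕ, k = -(n : ℤ) := ⟨k.natAbs, by omega⟩
      exact hAneg n
    · exact hA_pos k hk
  -- conclude via the Hilbert basis
  have hofReal_ne : (ENNReal.ofReal (2 * Real.pi)) ≠ 0 :=
    (ENNReal.ofReal_pos.mpr Real.two_pi_pos).ne'
  have hhaar : (AddCircle.haarAddCircle : Measure (AddCircle (2 * Real.pi)))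
      = (ENNReal.ofReal (2 * Real.pi))⁻¹ • (volume : Measure (AddCircle (2 * Real.pi))) := by
    rw [AddCircle.volume_eq_smul_haarAddCircle, smul_smul,
      ENNReal.inv_mul_cancel hofReal_ne ENNReal.ofReal_ne_top, one_smul]
  have hf_haar : MemLp f 2 (AddCircle.haarAddCircle : Measure (AddCircle (2 * Real.pi))) := by
    rw [hhaar]
    exact hf.smul_measure (ENNReal.inv_ne_top.mpr hofReal_ne)
  have hcoeff_all : ∀ k : ℤ, fourierCoeff f k = 0 := by
    intro k
    unfold fourierCoeff
    rw [hhaar, integral_smul_measure]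
    have h1 : (∫ t : AddCircle (2 * Real.pi), fourier (-k) t • f t ∂volume) = A (-k) := by
      rw [hA]
      simp only
      apply integral_congr_ae
      filter_upwards [hfg] with x hx
      rw [smul_eq_mul, hx, mul_comm]
    rw [h1, hA_all, smul_zero]
  set F2 : Lp ℂ 2 (AddCircle.haarAddCircle : Measure (AddCircle (2 * Real.pi))) :=
    hf_haar.toLp f with hF2def
  have hcoeffF2 : ∀ k : ℤ, fourierCoeff (F2 : AddCircle (2 * Real.pi) → ℂ) k = 0 := by
    intro k
    have : fourierCoeff (F2 : AddCircle (2 * Real.pi) → ℂ) k = fourierCoeff f k := by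
      unfold fourierCoeff
      apply integral_congr_ae
      filter_upwards [hf_haar.coeFn_toLp] with x hx
      rw [hF2def, hx]
    rw [this, hcoeff_all]
  have hrepr : fourierBasis.repr F2 = 0 := by
    ext k
    rw [fourierBasis_repr]
    simp [hcoeffF2 k]
  have hF2zero : F2 = 0 := by
    apply fourierBasis.repr.injective
    rw [hrepr, map_zero]
  have hfae : f =ᵐ[(AddCircle.haarAddCircle : Measure (AddCircle (2 * Real.pi)))] 0 := by
    have h1 := hf_haar.coeFn_toLp
    rw [← hF2def, hF2zero] at h1
    filter_upwards [h1.symm, Lp.coeFn_zero ℂ 2 (AddCircle.haarAddCircle :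
      Measure (AddCircle (2 * Real.pi)))] with x hx hx0
    rw [Pi.zero_apply] at hx0
    rw [hx, hx0]
    rfl
  rw [AddCircle.volume_eq_smul_haarAddCircle]
  exact Measure.ae_smul_measure hfae _
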